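/- arXiv:1707.05040 — 4 statements merged into one kernel-verified Lean document; each statement's English description precedes it below -/
import Mathlib

section
/- Let C be an abelian category with short exact sequences 0→X→P→X₁→0, 0→Z→Q→Z₁→0 and 0→X→Y→Z→0, and assume Ext¹_C(Z,P)=0. Then there exists an object Y₁ and a commuting diagram with exact rows and columns whose middle row is 0→Y→P⊕Q→Y₁→0 and whose right column is 0→X₁→Y₁→Z₁→0. -/
open CategoryTheory CategoryTheory.Limits

universe w w' v v' u u'

section Defs

variable {C : Type u} [Category.{v} C] [Abelian C]

/-- `f`, `g` form a short exact sequence `0 → X → Y → Z → 0`. -/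
def IsSES {X Y Z : C} (f : X ⟶ Y) (g : Y ⟶ Z) : Prop :=
  ∃ w : f ≫ g = 0, (ShortComplex.mk f g w).ShortExact

/-- Vanishing of the Yoneda Ext¹ group: every short exact sequence
`0 → P → E → Z → 0` splits. -/
def YonedaExt1Zero (Z P : C) : Prop :=
  ∀ (E : C) (i : P ⟶ E) (p : E ⟶ Z), IsSES i p → ∃ s : Z ⟶ E, s ≫ p = 𝟙 Z

/-- A totally acyclic complex of projectives: an exact complex of projective
objects which stays exact after applying `Hom(-, Q)` for every projective `Q`. -/
structure IsTotallyAcyclic (P : ChainComplex C ℤ) : Prop where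
  projective : ∀ i, Projective (P.X i)
  acyclic : ∀ i, P.ExactAt i
  homExact : ∀ (Q : C), Projective Q → ∀ (i : ℤ) (f : P.X i ⟶ Q),
    P.d (i + 1) i ≫ f = 0 → ∃ g : P.X (i - 1) ⟶ Q, P.d i (i - 1) ≫ g = f

/-- An object is Gorenstein projective if it is (isomorphic to) a syzygy of a
totally acyclic complex of projectives. -/
def IsGorensteinProjective (X : C) : Prop :=
  ∃ P : ChainComplex C ℤ, IsTotallyAcyclic P ∧ Nonempty (X ≅ cokernel (P.d 1 0))

/-- `X` admits a resolution of length at most `n` by objects satisfying `S`. -/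
inductive HasResDimLE (S : C → Prop) : C → ℕ → Prop
  | of_mem {X : C} (hX : S X) (n : ℕ) : HasResDimLE S X n
  | step {X K G : C} (n : ℕ) (f : K ⟶ G) (g : G ⟶ X)
      (hses : IsSES f g) (hG : S G) (hK : HasResDimLE S K n) :
      HasResDimLE S X (n + 1)

/-- The G-dimension: the minimal length of a Gorenstein projective resolution. -/
noncomputable def gDim (X : C) : ℕ∞ :=
  sInf {n : ℕ∞ | ∃ m : ℕ, n = (m : ℕ∞) ∧ HasResDimLE IsGorensteinProjective X m}

variable [HasExt.{w} C]

/-- The projective dimension: the minimal `m` such that `Ext^j(X, -)` vanishes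
for all `j > m`. -/
noncomputable def projDim (X : C) : ℕ∞ :=
  sInf {n : ℕ∞ | ∃ m : ℕ, n = (m : ℕ∞) ∧
    ∀ (Y : C) (j : ℕ), m < j → Subsingleton (Abelian.Ext X Y j)}

/-- The injective dimension: the minimal `m` such that `Ext^j(-, X)` vanishes
for all `j > m`. -/
noncomputable def injDim (X : C) : ℕ∞ :=
  sInf {n : ℕ∞ | ∃ m : ℕ, n = (m : ℕ∞) ∧
    ∀ (Y : C) (j : ℕ), m < j → Subsingleton (Abelian.Ext Y X j)}

end Defs

open ZeroObject
/-- Baby horseshoe lemma. -/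
theorem baby_horseshoe {C : Type u} [Category.{v} C] [Abelian C]
    {X P X₁ Z Q Z₁ Y : C}
    (f₁ : X ⟶ P) (g₁ : P ⟶ X₁) (h₁ : IsSES f₁ g₁)
    (f₂ : Z ⟶ Q) (g₂ : Q ⟶ Z₁) (h₂ : IsSES f₂ g₂)
    (f₃ : X ⟶ Y) (g₃ : Y ⟶ Z) (h₃ : IsSES f₃ g₃)
    (hext : YonedaExt1Zero Z P) :
    ∃ (Y₁ : C) (u : Y ⟶ P ⊞ Q) (v : P ⊞ Q ⟶ Y₁) (a : X₁ ⟶ Y₁) (b : Y₁ ⟶ Z₁),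
      IsSES u v ∧ IsSES a b ∧
      f₃ ≫ u = f₁ ≫ biprod.inl ∧
      biprod.inl ≫ v = g₁ ≫ a ∧
      u ≫ biprod.snd = g₃ ≫ f₂ ∧
      v ≫ b = biprod.snd ≫ g₂ := by
  obtain ⟨w₁, hse₁⟩ := h₁
  obtain ⟨w₂, hse₂⟩ := h₂
  obtain ⟨w₃, hse₃⟩ := h₃
  haveI : Mono f₁ := hse₁.mono_f
  haveI : Epi g₁ := hse₁.epi_g
  haveI : Mono f₂ := hse₂.mono_f
  haveI : Epi g₂ := hse₂.epi_g
  haveI : Mono f₃ := hse₃.mono_f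
  haveI : Epi g₃ := hse₃.epi_g
  -- Step 1: construct φ : Y ⟶ P with f₃ ≫ φ = f₁, using the pushout and Ext-vanishing.
  let p : pushout f₁ f₃ ⟶ Z := pushout.desc (0 : P ⟶ Z) g₃ (by rw [comp_zero, w₃])
  have hinlp : pushout.inl f₁ f₃ ≫ p = 0 := pushout.inl_desc _ _ _
  have hinrp : pushout.inr f₁ f₃ ≫ p = g₃ := pushout.inr_desc _ _ _
  haveI : Epi p := by
    have : Epi (pushout.inr f₁ f₃ ≫ p) := by rw [hinrp]; infer_instance
    exact epi_of_epi (pushout.inr f₁ f₃) p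
  have hEexact : (ShortComplex.mk (pushout.inl f₁ f₃) p hinlp).Exact := by
    apply ShortComplex.exact_of_g_is_cokernel
    refine CokernelCofork.IsColimit.ofπ' p hinlp (fun {A} k hk => ?_)
    have hk' : f₃ ≫ pushout.inr f₁ f₃ ≫ k = 0 := by
      rw [← pushout.condition_assoc, hk, comp_zero]
    refine ⟨hse₃.exact.desc (pushout.inr f₁ f₃ ≫ k) hk', ?_⟩
    apply pushout.hom_ext
    · rw [reassoc_of% hinlp, zero_comp, hk]
    · rw [reassoc_of% hinrp]
      exact hse₃.exact.g_desc _ _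
  obtain ⟨s, hs⟩ := hext (pushout f₁ f₃) (pushout.inl f₁ f₃) p
    ⟨hinlp, ShortComplex.ShortExact.mk' hEexact inferInstance inferInstance⟩
  let spl := ShortComplex.Splitting.ofExactOfSection _ hEexact s hs inferInstance
  let φ : Y ⟶ P := pushout.inr f₁ f₃ ≫ spl.r
  have hφ : f₃ ≫ φ = f₁ := by
    show f₃ ≫ pushout.inr f₁ f₃ ≫ spl.r = f₁
    rw [← pushout.condition_assoc]
    have := spl.f_r
    dsimp at this
    rw [this, Category.comp_id]
  -- Step 2: the middle row
  let u : Y ⟶ P ⊞ Q := biprod.lift φ (g₃ ≫ f₂)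
  have hufst : u ≫ biprod.fst = φ := biprod.lift_fst _ _
  have husnd : u ≫ biprod.snd = g₃ ≫ f₂ := biprod.lift_snd _ _
  haveI humono : Mono u := by
    rw [Preadditive.mono_iff_cancel_zero]
    intro A t ht
    have h1 : t ≫ φ = 0 := by
      have := ht =≫ biprod.fst
      rwa [Category.assoc, hufst, zero_comp] at this
    have h2 : (t ≫ g₃) ≫ f₂ = 0 := by
      have := ht =≫ biprod.snd
      rwa [Category.assoc, husnd, zero_comp, ← Category.assoc] at this
    have h3 : t ≫ g₃ = 0 := by rwa [← cancel_mono f₂, zero_comp]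
    obtain ⟨t', ht'⟩ := hse₃.exact.lift' t h3
    have h4 : t' = 0 := by
      rw [← cancel_mono f₁, zero_comp, ← hφ, ← Category.assoc]
      dsimp at ht'
      rw [ht', h1]
    rw [← ht', h4, zero_comp]
  have hfu : f₃ ≫ u = f₁ ≫ biprod.inl := by
    apply biprod.hom_ext
    · rw [Category.assoc, hufst, hφ, Category.assoc, biprod.inl_fst, Category.comp_id]
    · rw [Category.assoc, husnd, ← Category.assoc, w₃, zero_comp,
        Category.assoc, biprod.inl_snd, comp_zero]
  let v : P ⊞ Q ⟶ cokernel u := cokernel.π u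
  haveI hvepi : Epi v := inferInstanceAs (Epi (cokernel.π u))
  have huv : u ≫ v = 0 := cokernel.condition u
  have hmidexact : (ShortComplex.mk u v huv).Exact :=
    ShortComplex.exact_of_g_is_cokernel _ (cokernelIsCokernel u)
  -- Step 3: the right column maps
  have hfinlv : f₁ ≫ biprod.inl ≫ v = 0 := by
    rw [← Category.assoc, ← hfu, Category.assoc, huv, comp_zero]
  let a : X₁ ⟶ cokernel u := hse₁.exact.desc (biprod.inl ≫ v) hfinlv
  have hga : g₁ ≫ a = biprod.inl ≫ v := hse₁.exact.g_desc _ _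
  have husndg : u ≫ biprod.snd ≫ g₂ = 0 := by
    rw [← Category.assoc, husnd, Category.assoc, w₂, comp_zero]
  let b : cokernel u ⟶ Z₁ := cokernel.desc u (biprod.snd ≫ g₂) husndg
  have hvb : v ≫ b = biprod.snd ≫ g₂ := cokernel.π_desc _ _ _
  have hab : a ≫ b = 0 := by
    rw [← cancel_epi g₁, reassoc_of% hga, hvb, biprod.inl_snd_assoc, zero_comp, comp_zero]
  -- Step 4: the snake input
  let L₀ : ShortComplex C := ShortComplex.mk (0 : (0 : C) ⟶ (0 : C)) (0 : (0 : C) ⟶ (0 : C)) (by simp)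
  let L₁ : ShortComplex C := ShortComplex.mk f₃ g₃ w₃
  let L₂ : ShortComplex C := ShortComplex.mk (biprod.inl : P ⟶ P ⊞ Q) biprod.snd biprod.inl_snd
  let L₃ : ShortComplex C := ShortComplex.mk a b hab
  let v₁₂ : L₁ ⟶ L₂ :=
    { τ₁ := f₁, τ₂ := u, τ₃ := f₂,
      comm₁₂ := hfu.symm, comm₂₃ := husnd }
  let v₂₃ : L₂ ⟶ L₃ :=
    { τ₁ := g₁, τ₂ := v, τ₃ := g₂,
      comm₁₂ := hga, comm₂₃ := hvb }
  have w₀₂ : (0 : L₀ ⟶ L₁) ≫ v₁₂ = 0 := zero_comp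
  have w₁₃ : v₁₂ ≫ v₂₃ = 0 := by
    ext
    · exact w₁
    · exact huv
    · exact w₂
  let D : ShortComplex.SnakeInput C :=
    { L₀ := L₀, L₁ := L₁, L₂ := L₂, L₃ := L₃,
      v₀₁ := 0, v₁₂ := v₁₂, v₂₃ := v₂₃,
      w₀₂ := w₀₂, w₁₃ := w₁₃,
      h₀ := KernelFork.IsLimit.ofι _ _ (fun _ _ => 0)
        (fun {A} x hx => by
          have e1 : x.τ₁ ≫ f₁ = 0 := congrArg ShortComplex.Hom.τ₁ hx
          have e2 : x.τ₂ ≫ u = 0 := congrArg ShortComplex.Hom.τ₂ hx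
          have e3 : x.τ₃ ≫ f₂ = 0 := congrArg ShortComplex.Hom.τ₃ hx
          have h1 : x.τ₁ = 0 := by rwa [← cancel_mono f₁, zero_comp]
          have h2 : x.τ₂ = 0 := by rwa [← cancel_mono u, zero_comp]
          have h3 : x.τ₃ = 0 := by rwa [← cancel_mono f₂, zero_comp]
          rw [zero_comp]
          exact (ShortComplex.hom_ext _ _ h1.symm h2.symm h3.symm))
        (fun x hx m hm => by
          apply ShortComplex.hom_ext <;> exact (isZero_zero C).eq_of_tgt _ _)
      h₃ := CokernelCofork.IsColimit.ofπ _ _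
        (fun {A} x hx => by
          have e1 : f₁ ≫ x.τ₁ = 0 := congrArg ShortComplex.Hom.τ₁ hx
          have e2 : u ≫ x.τ₂ = 0 := congrArg ShortComplex.Hom.τ₂ hx
          have e3 : f₂ ≫ x.τ₃ = 0 := congrArg ShortComplex.Hom.τ₃ hx
          exact
            { τ₁ := hse₁.exact.desc x.τ₁ e1
              τ₂ := cokernel.desc u x.τ₂ e2
              τ₃ := hse₂.exact.desc x.τ₃ e3
              comm₁₂ := by
                have c1 : g₁ ≫ hse₁.exact.desc x.τ₁ e1 = x.τ₁ := hse₁.exact.g_desc _ _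
                have c2 : v ≫ cokernel.desc u x.τ₂ e2 = x.τ₂ := cokernel.π_desc _ _ _
                rw [← cancel_epi g₁, reassoc_of% c1, reassoc_of% hga, c2]
                exact x.comm₁₂
              comm₂₃ := by
                have c2 : v ≫ cokernel.desc u x.τ₂ e2 = x.τ₂ := cokernel.π_desc _ _ _
                have c3 : g₂ ≫ hse₂.exact.desc x.τ₃ e3 = x.τ₃ := hse₂.exact.g_desc _ _
                rw [← cancel_epi v, reassoc_of% c2, reassoc_of% hvb, c3]
                exact x.comm₂₃ })
        (fun {A} x hx => by
          apply ShortComplex.hom_ext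
          · exact hse₁.exact.g_desc _ _
          · exact cokernel.π_desc _ _ _
          · exact hse₂.exact.g_desc _ _)
        (fun {A} x hx m hm => by
          have m1 := congrArg ShortComplex.Hom.τ₁ hm
          have m2 := congrArg ShortComplex.Hom.τ₂ hm
          have m3 := congrArg ShortComplex.Hom.τ₃ hm
          apply ShortComplex.hom_ext
          · rw [← cancel_epi g₁]
            exact m1.trans (hse₁.exact.g_desc _ _).symm
          · rw [← cancel_epi (cokernel.π u)]
            exact m2.trans (cokernel.π_desc _ _ _).symm
          · rw [← cancel_epi g₂]
            exact m3.trans (hse₂.exact.g_desc _ _).symm)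
      L₁_exact := hse₃.exact
      epi_L₁_g := hse₃.epi_g
      L₂_exact := ShortComplex.Splitting.exact
        { r := biprod.fst, s := biprod.inr,
          f_r := biprod.inl_fst, s_g := biprod.inr_snd,
          id := biprod.total }
      mono_L₂_f := by dsimp [L₂]; infer_instance }
  -- Step 5: conclude
  have hδ : D.δ = 0 := (isZero_zero C).eq_of_src _ _
  haveI hamono : Mono a := by
    have := D.L₂'_exact
    rw [ShortComplex.exact_iff_mono _ hδ] at this
    exact this
  haveI hbepi : Epi b := by
    have : Epi L₃.g := D.epi_L₃_g
    exact this
  refine ⟨cokernel u, u, v, a, b,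
    ⟨huv, ShortComplex.ShortExact.mk' hmidexact humono inferInstance⟩,
    ⟨hab, ShortComplex.ShortExact.mk' D.L₃_exact hamono hbepi⟩,
    hfu, hga.symm, husnd, hvb⟩
end

section
/- Let R: C̃ → C be a Frobenius extension of abelian categories (R has faithful left adjoint I and faithful right adjoint C', and I ≅ C'∘E for an auto-equivalence E of C). Then C̃ has enough projective objects if and only if C has enough projective objects; moreover, in that case the projective objects of C̃ are exactly the direct summands of objects I(P) with P projective in C, and the projective objects of C are exactly direct summands of R(Q) with Q projective in C̃. -/
open CategoryTheory CategoryTheory.Limits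

universe w w' v v' u u'

section Aux

variable {A : Type*} [Category A]

lemma projective_of_retract' {P Q : A} (hP : Projective P)
    (s : Q ⟶ P) (r : P ⟶ Q) (h : s ≫ r = 𝟙 Q) : Projective Q where
  factors f e he := by
    obtain ⟨g, hg⟩ := hP.factors (r ≫ f) e
    exact ⟨s ≫ g, by rw [Category.assoc, hg, ← Category.assoc, h, Category.id_comp]⟩

end Aux

/-- For a Frobenius extension `R : D ⥤ C`, `D` has enough projectives iff `C`
does; in that case the projectives are described by `I` and `R`. -/
theorem frobenius_enough_projectives
    {C : Type u} [Category.{v} C] [Abelian C]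
    {D : Type u'} [Category.{v'} D] [Abelian D]
    (R : D ⥤ C) (I Co : C ⥤ D)
    [R.Additive] [I.Additive] [Co.Additive]
    [R.Faithful] [I.Faithful] [Co.Faithful]
    (adj₁ : I ⊣ R) (adj₂ : R ⊣ Co)
    (E : C ≌ C) (hE : I ≅ E.functor ⋙ Co) :
    (EnoughProjectives D ↔ EnoughProjectives C) ∧
    (EnoughProjectives C →
      ((∀ Q : D, Projective Q ↔
          ∃ (P : C) (_ : Projective P) (s : Q ⟶ I.obj P) (r : I.obj P ⟶ Q),
            s ≫ r = 𝟙 Q) ∧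
       (∀ P : C, Projective P ↔
          ∃ (Q : D) (_ : Projective Q) (s : P ⟶ R.obj Q) (r : R.obj Q ⟶ P),
            s ≫ r = 𝟙 P))) := by
  haveI := Adjunction.leftAdjoint_preservesColimits.{0,0} adj₁
  haveI := Adjunction.leftAdjoint_preservesColimits.{0,0} adj₂
  haveI := Adjunction.leftAdjoint_preservesColimits.{0,0} E.symm.toAdjunction
  -- `Co` preserves epis because `Co ≅ E.inverse ⋙ I`
  have isoCo : E.inverse ⋙ I ≅ Co :=
    Functor.isoWhiskerLeft E.inverse hE ≪≫ (Functor.associator _ _ _).symm ≪≫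
      Functor.isoWhiskerRight E.counitIso Co ≪≫ Co.leftUnitor
  haveI : Co.PreservesEpimorphisms := Functor.preservesEpimorphisms.of_iso isoCo
  -- `C` has enough projectives → `D` does
  have hCD : EnoughProjectives C → EnoughProjectives D := by
    intro hC
    haveI := hC
    refine ⟨fun X => ⟨{
      p := I.obj (Projective.over (R.obj X))
      projective := adj₁.map_projective _ inferInstance
      f := I.map (Projective.π (R.obj X)) ≫ adj₁.counit.app X
      epi := epi_comp _ _ }⟩⟩
  -- `D` has enough projectives → `C` does
  have hDC : EnoughProjectives D → EnoughProjectives C := by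
    intro hD
    haveI := hD
    refine ⟨fun X => ⟨{
      p := R.obj (Projective.over (Co.obj X))
      projective := adj₂.map_projective _ inferInstance
      f := R.map (Projective.π (Co.obj X)) ≫ adj₂.counit.app X
      epi := epi_comp _ _ }⟩⟩
  refine ⟨⟨hDC, hCD⟩, fun hC => ⟨fun Q => ?_, fun P => ?_⟩⟩
  · haveI := hC
    constructor
    · intro hQ
      haveI := hQ
      refine ⟨Projective.over (R.obj Q), inferInstance, ?_⟩
      set e : I.obj (Projective.over (R.obj Q)) ⟶ Q :=
        I.map (Projective.π (R.obj Q)) ≫ adj₁.counit.app Q with he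
      haveI : Epi e := epi_comp _ _
      exact ⟨Projective.factorThru (𝟙 Q) e, e, Projective.factorThru_comp _ _⟩
    · rintro ⟨P, hP, s, r, hsr⟩
      exact projective_of_retract' (adj₁.map_projective P hP) s r hsr
  · constructor
    · intro hP
      haveI := hP
      have hP' : Projective (Co.obj P) :=
        Projective.of_iso (isoCo.app P)
          (adj₁.map_projective _ ((E.symm.map_projective_iff P).mpr hP))
      refine ⟨Co.obj P, hP', ?_⟩
      have : Epi (adj₂.counit.app P) := inferInstance
      exact ⟨Projective.factorThru (𝟙 P) (adj₂.counit.app P), adj₂.counit.app P,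
        Projective.factorThru_comp _ _⟩
    · rintro ⟨Q, hQ, s, r, hsr⟩
      exact projective_of_retract' (adj₂.map_projective Q hQ) s r hsr
end

section
/- Let R: C̃ → C be a Frobenius extension of abelian categories with adjoints I (left) and C' (right). For every projective object P of C and projective object Q of C̃, the injective dimension of P in C equals the injective dimension of I(P) in C̃ (and also of C'(P)), and the injective dimension of Q in C̃ equals the injective dimension of R(Q) in C. -/
open CategoryTheory CategoryTheory.Limits

universe w w' v v' u u'

section FrobAuxSection

open CategoryTheory.Abelian

namespace FrobeniusAux

section TwoCats

universe wa wb va vb ua ub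

variable {A : Type ua} [Category.{va} A] [Abelian A]
variable {B : Type ub} [Category.{vb} B] [Abelian B]

/-- An adjunction between additive functors induces an adjunction on
categories of cochain complexes. -/
noncomputable def adjMapHC (F : A ⥤ B) (G : B ⥤ A) [F.Additive] [G.Additive]
    (adj : F ⊣ G) :
    F.mapHomologicalComplex (ComplexShape.up ℤ) ⊣
      G.mapHomologicalComplex (ComplexShape.up ℤ) :=
  Adjunction.mkOfHomEquiv
    { homEquiv := fun K L =>
        { toFun := fun f =>
            { f := fun i => adj.homEquiv _ _ (f.f i)
              comm' := fun i j _ => by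
                show adj.homEquiv _ _ (f.f i) ≫ G.map (L.d i j) =
                  K.d i j ≫ adj.homEquiv _ _ (f.f j)
                exact (adj.homEquiv_naturality_right (f.f i) (L.d i j)).symm.trans
                  ((congrArg (adj.homEquiv _ _) (f.comm i j)).trans
                    (adj.homEquiv_naturality_left (K.d i j) (f.f j))) }
          invFun := fun g =>
            { f := fun i => (adj.homEquiv _ _).symm (g.f i)
              comm' := fun i j _ => by
                show (adj.homEquiv _ _).symm (g.f i) ≫ L.d i j =
                  F.map (K.d i j) ≫ (adj.homEquiv _ _).symm (g.f j)
                exact (adj.homEquiv_naturality_right_symm (g.f i) (L.d i j)).symm.trans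
                  ((congrArg (adj.homEquiv _ _).symm (g.comm i j)).trans
                    (adj.homEquiv_naturality_left_symm (K.d i j) (g.f j))) }
          left_inv := fun f => by ext i; exact Equiv.symm_apply_apply _ _
          right_inv := fun g => by ext i; exact Equiv.apply_symm_apply _ _ }
      homEquiv_naturality_left_symm := fun f g => by
        ext i
        exact adj.homEquiv_naturality_left_symm _ _
      homEquiv_naturality_right := fun f g => by
        ext i
        exact adj.homEquiv_naturality_right _ _ }

variable (A) in
/-- The single functor to the derived category factors through `Q`. -/
noncomputable def sQIso [HasDerivedCategory A] :
    DerivedCategory.singleFunctor A 0 ≅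
      CochainComplex.singleFunctor A 0 ⋙ DerivedCategory.Q where
  hom := (DerivedCategory.singleFunctorsPostcompQIso A).hom.hom 0
  inv := (DerivedCategory.singleFunctorsPostcompQIso A).inv.hom 0
  hom_inv_id :=
    congrArg (fun φ => φ.hom 0) (DerivedCategory.singleFunctorsPostcompQIso A).hom_inv_id
  inv_hom_id :=
    congrArg (fun φ => φ.hom 0) (DerivedCategory.singleFunctorsPostcompQIso A).inv_hom_id

/-- The derived functor of an exact functor commutes with single functors. -/
noncomputable def mapSingleObjIso (F : A ⥤ B) [F.Additive]
    [PreservesFiniteLimits F] [PreservesFiniteColimits F]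
    [HasDerivedCategory A] [HasDerivedCategory B] (X : A) :
    F.mapDerivedCategory.obj ((DerivedCategory.singleFunctor A 0).obj X) ≅
      (DerivedCategory.singleFunctor B 0).obj (F.obj X) :=
  F.mapDerivedCategory.mapIso ((sQIso A).app X) ≪≫
    F.mapDerivedCategoryFactors.app _ ≪≫
    DerivedCategory.Q.mapIso
      ((HomologicalComplex.singleMapHomologicalComplex F (ComplexShape.up ℤ) 0).app X) ≪≫
    ((sQIso B).app (F.obj X)).symm

/-- An adjunction between exact functors induces isomorphisms of all Ext groups. -/
noncomputable def extAdjEquiv [HasExt.{wa} A] [HasExt.{wb} B]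
    (F : A ⥤ B) (G : B ⥤ A) [F.Additive] [G.Additive]
    [PreservesFiniteLimits F] [PreservesFiniteColimits F]
    [PreservesFiniteLimits G] [PreservesFiniteColimits G]
    (adj : F ⊣ G) (X : A) (Y : B) (n : ℕ) :
    Abelian.Ext X (G.obj Y) n ≃ Abelian.Ext (F.obj X) Y n := by
  letI := HasDerivedCategory.standard A
  letI := HasDerivedCategory.standard B
  haveI : CatCommSq (F.mapHomologicalComplex (ComplexShape.up ℤ))
      DerivedCategory.Q DerivedCategory.Q F.mapDerivedCategory :=
    ⟨F.mapDerivedCategoryFactors.symm⟩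
  haveI : CatCommSq (G.mapHomologicalComplex (ComplexShape.up ℤ))
      DerivedCategory.Q DerivedCategory.Q G.mapDerivedCategory :=
    ⟨G.mapDerivedCategoryFactors.symm⟩
  have adj' : F.mapDerivedCategory ⊣ G.mapDerivedCategory :=
    (adjMapHC F G adj).localization DerivedCategory.Q
      (HomologicalComplex.quasiIso A (ComplexShape.up ℤ)) DerivedCategory.Q
      (HomologicalComplex.quasiIso B (ComplexShape.up ℤ))
      F.mapDerivedCategory G.mapDerivedCategory
  exact Abelian.Ext.homEquiv.trans
    ((Iso.homCongr (Iso.refl _)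
        (((shiftFunctor _ ((n : ℕ) : ℤ)).mapIso (mapSingleObjIso G Y)).symm ≪≫
          ((G.mapDerivedCategory.commShiftIso ((n : ℕ) : ℤ)).app
            ((DerivedCategory.singleFunctor B 0).obj Y)).symm)).trans
      (((adj'.homEquiv _ _).symm).trans
        ((Iso.homCongr (mapSingleObjIso F X) (Iso.refl _)).trans
          Abelian.Ext.homEquiv.symm)))


/-- Equality of injective dimensions across categories from levelwise
equivalence of the Ext-vanishing conditions. -/
lemma injDim_eq [HasExt.{wa} A] [HasExt.{wb} B] (X : A) (X' : B)
    (h : ∀ m : ℕ, (∀ (Y : A) (j : ℕ), m < j → Subsingleton (Abelian.Ext Y X j)) ↔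
                  (∀ (Y : B) (j : ℕ), m < j → Subsingleton (Abelian.Ext Y X' j))) :
    injDim X = injDim X' := by
  unfold injDim
  congr 1
  ext n
  simp only [Set.mem_setOf_eq]
  constructor
  · rintro ⟨m, rfl, hm⟩
    exact ⟨m, rfl, (h m).1 hm⟩
  · rintro ⟨m, rfl, hm⟩
    exact ⟨m, rfl, (h m).2 hm⟩

end TwoCats

section OneCat

universe wc vc uc

variable {C : Type uc} [Category.{vc} C] [Abelian C] [HasExt.{wc} C]

lemma ext_subsingleton_of_retract {X X' Y : C} (s : X ⟶ X') (r : X' ⟶ X)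
    (hsr : s ≫ r = 𝟙 X) {n : ℕ} (h : Subsingleton (Abelian.Ext Y X' n)) :
    Subsingleton (Abelian.Ext Y X n) := by
  constructor
  intro α β
  have key : ∀ γ : Abelian.Ext Y X n,
      (γ.comp (Abelian.Ext.mk₀ s) (add_zero n)).comp (Abelian.Ext.mk₀ r) (add_zero n) = γ := by
    intro γ
    rw [Abelian.Ext.comp_assoc_of_third_deg_zero, Abelian.Ext.mk₀_comp_mk₀, hsr,
      Abelian.Ext.comp_mk₀_id]
  rw [← key α, ← key β,
    h.elim (α.comp (Abelian.Ext.mk₀ s) (add_zero n)) (β.comp (Abelian.Ext.mk₀ s) (add_zero n))]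

lemma ext_subsingleton_iso_snd {X X' Y : C} (e : X ≅ X') {n : ℕ}
    (h : Subsingleton (Abelian.Ext Y X' n)) : Subsingleton (Abelian.Ext Y X n) :=
  ext_subsingleton_of_retract e.hom e.inv e.hom_inv_id h

lemma ext_subsingleton_iso_fst {Y Y' X : C} (e : Y ≅ Y') {n : ℕ}
    (h : Subsingleton (Abelian.Ext Y' X n)) : Subsingleton (Abelian.Ext Y X n) := by
  constructor
  intro α β
  have key : ∀ γ : Abelian.Ext Y X n,
      (Abelian.Ext.mk₀ e.hom).comp ((Abelian.Ext.mk₀ e.inv).comp γ (zero_add n)) (zero_add n)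
        = γ := by
    intro γ
    rw [Abelian.Ext.mk₀_comp_mk₀_assoc, e.hom_inv_id, Abelian.Ext.mk₀_id_comp]
  rw [← key α, ← key β,
    h.elim ((Abelian.Ext.mk₀ e.inv).comp α (zero_add n))
      ((Abelian.Ext.mk₀ e.inv).comp β (zero_add n))]


end OneCat

end FrobeniusAux

end FrobAuxSection

/-- Injective dimensions of projective objects are preserved by Frobenius
extensions. -/
theorem frobenius_injective_dimensions
    {C : Type u} [Category.{v} C] [Abelian C]
    {D : Type u'} [Category.{v'} D] [Abelian D]
    [HasExt.{w} C] [HasExt.{w'} D]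
    (R : D ⥤ C) (I Co : C ⥤ D)
    [R.Additive] [I.Additive] [Co.Additive]
    [R.Faithful] [I.Faithful] [Co.Faithful]
    (adj₁ : I ⊣ R) (adj₂ : R ⊣ Co)
    (E : C ≌ C) (hE : I ≅ E.functor ⋙ Co) :
    (∀ P : C, Projective P →
      injDim P = injDim (I.obj P) ∧ injDim P = injDim (Co.obj P)) ∧
    (∀ Q : D, Projective Q → injDim Q = injDim (R.obj Q)) := by
  -- exactness of all the functors involved
  haveI : PreservesLimitsOfSize.{0, 0} R := adj₁.rightAdjoint_preservesLimits
  haveI : PreservesColimitsOfSize.{0, 0} R := adj₂.leftAdjoint_preservesColimits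
  haveI : PreservesLimitsOfSize.{0, 0} Co := adj₂.rightAdjoint_preservesLimits
  haveI : PreservesColimitsOfSize.{0, 0} I := adj₁.leftAdjoint_preservesColimits
  haveI : PreservesLimitsOfSize.{0, 0} E.functor :=
    E.symm.toAdjunction.rightAdjoint_preservesLimits
  haveI : PreservesColimitsOfSize.{0, 0} E.functor :=
    E.toAdjunction.leftAdjoint_preservesColimits
  haveI : PreservesLimitsOfSize.{0, 0} E.inverse :=
    E.toAdjunction.rightAdjoint_preservesLimits
  haveI : PreservesColimitsOfSize.{0, 0} E.inverse :=
    E.symm.toAdjunction.leftAdjoint_preservesColimits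
  haveI : PreservesFiniteLimits I := by
    haveI : PreservesFiniteLimits (E.functor ⋙ Co) := comp_preservesFiniteLimits _ _
    exact preservesFiniteLimits_of_natIso hE.symm
  haveI : PreservesFiniteColimits Co := by
    haveI : PreservesFiniteColimits (E.inverse ⋙ I) := comp_preservesFiniteColimits _ _
    exact preservesFiniteColimits_of_natIso
      (Functor.isoWhiskerLeft E.inverse hE ≪≫ E.invFunIdAssoc Co)
  haveI : E.functor.Additive := Functor.additive_of_preserves_binary_products _
  haveI : E.inverse.Additive := inferInstance
  -- the three basic Ext equivalences
  have eA : ∀ (Z : C) (Q : D) (n : ℕ),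
      Abelian.Ext Z (R.obj Q) n ≃ Abelian.Ext (I.obj Z) Q n :=
    fun Z Q n => FrobeniusAux.extAdjEquiv I R adj₁ Z Q n
  have eB : ∀ (Y : D) (X : C) (n : ℕ),
      Abelian.Ext Y (Co.obj X) n ≃ Abelian.Ext (R.obj Y) X n :=
    fun Y X n => FrobeniusAux.extAdjEquiv R Co adj₂ Y X n
  have eE : ∀ (Z W : C) (n : ℕ),
      Abelian.Ext Z (E.inverse.obj W) n ≃ Abelian.Ext (E.functor.obj Z) W n :=
    fun Z W n => FrobeniusAux.extAdjEquiv E.functor E.inverse E.toAdjunction Z W n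
  -- invariance of Ext vanishing under the auto-equivalence `E`
  have hEdim : ∀ (X : C) (m : ℕ),
      (∀ (Z : C) (j : ℕ), m < j → Subsingleton (Abelian.Ext Z X j)) ↔
      (∀ (Z : C) (j : ℕ), m < j → Subsingleton (Abelian.Ext Z (E.functor.obj X) j)) := by
    intro X m
    constructor
    · intro h Z j hj
      refine FrobeniusAux.ext_subsingleton_iso_fst (E.counitIso.app Z).symm ?_
      haveI : Subsingleton (Abelian.Ext (E.inverse.obj Z) (E.inverse.obj (E.functor.obj X)) j) :=
        FrobeniusAux.ext_subsingleton_iso_snd (E.unitIso.app X).symm (h (E.inverse.obj Z) j hj)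
      exact (eE (E.inverse.obj Z) (E.functor.obj X) j).symm.subsingleton
    · intro h Z j hj
      refine FrobeniusAux.ext_subsingleton_iso_snd (E.unitIso.app X) ?_
      haveI : Subsingleton (Abelian.Ext (E.functor.obj Z) (E.functor.obj X) j) :=
        h (E.functor.obj Z) j hj
      exact (eE Z (E.functor.obj X) j).subsingleton
  -- the counits are epimorphisms
  have epi₁ : ∀ Q : D, Epi (adj₁.counit.app Q) := by
    intro Q
    apply R.epi_of_epi_map
    have : IsSplitEpi (R.map (adj₁.counit.app Q)) :=
      ⟨⟨⟨adj₁.unit.app (R.obj Q), adj₁.right_triangle_components Q⟩⟩⟩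
    infer_instance
  have epi₂ : ∀ X : C, Epi (adj₂.counit.app X) := by
    intro X
    apply Co.epi_of_epi_map
    have : IsSplitEpi (Co.map (adj₂.counit.app X)) :=
      ⟨⟨⟨adj₂.unit.app (Co.obj X), adj₂.right_triangle_components X⟩⟩⟩
    infer_instance
  constructor
  · intro P hP
    constructor
    · -- injDim P = injDim (I P)
      refine FrobeniusAux.injDim_eq P (I.obj P) (fun m => ⟨fun h Y j hj => ?_, fun h => ?_⟩)
      · refine FrobeniusAux.ext_subsingleton_iso_snd (hE.app P) ?_
        haveI : Subsingleton (Abelian.Ext (R.obj Y) (E.functor.obj P) j) :=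
          (hEdim P m).1 h (R.obj Y) j hj
        exact (eB Y (E.functor.obj P) j).subsingleton
      · refine (hEdim P m).2 ?_
        intro Z j hj
        haveI hWproj : Projective (E.functor.obj P) := (E.map_projective_iff P).2 hP
        haveI := epi₂ (E.functor.obj P)
        have hsr : Projective.factorThru (𝟙 (E.functor.obj P))
              (adj₂.counit.app (E.functor.obj P)) ≫ adj₂.counit.app (E.functor.obj P) =
            𝟙 (E.functor.obj P) :=
          Projective.factorThru_comp _ _
        refine FrobeniusAux.ext_subsingleton_of_retract _ _ hsr ?_
        haveI : Subsingleton (Abelian.Ext (I.obj Z) (Co.obj (E.functor.obj P)) j) :=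
          FrobeniusAux.ext_subsingleton_iso_snd (hE.app P).symm (h (I.obj Z) j hj)
        exact (eA Z (Co.obj (E.functor.obj P)) j).subsingleton
    · -- injDim P = injDim (Co P)
      refine FrobeniusAux.injDim_eq P (Co.obj P)
        (fun m => ⟨fun h Y j hj => ?_, fun h Z j hj => ?_⟩)
      · haveI : Subsingleton (Abelian.Ext (R.obj Y) P j) := h (R.obj Y) j hj
        exact (eB Y P j).subsingleton
      · haveI := epi₂ P
        have hsr : Projective.factorThru (𝟙 P) (adj₂.counit.app P) ≫ adj₂.counit.app P =
            𝟙 P :=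
          Projective.factorThru_comp _ _
        refine FrobeniusAux.ext_subsingleton_of_retract _ _ hsr ?_
        haveI : Subsingleton (Abelian.Ext (I.obj Z) (Co.obj P) j) := h (I.obj Z) j hj
        exact (eA Z (Co.obj P) j).subsingleton
  · intro Q hQ
    refine FrobeniusAux.injDim_eq Q (R.obj Q)
      (fun m => ⟨fun h Z j hj => ?_, fun h Y j hj => ?_⟩)
    · haveI : Subsingleton (Abelian.Ext (I.obj Z) Q j) := h (I.obj Z) j hj
      exact (eA Z Q j).subsingleton
    · haveI := epi₁ Q
      have hsr : Projective.factorThru (𝟙 Q) (adj₁.counit.app Q) ≫ adj₁.counit.app Q = 𝟙 Q :=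
        Projective.factorThru_comp _ _
      refine FrobeniusAux.ext_subsingleton_of_retract _ _ hsr ?_
      refine FrobeniusAux.ext_subsingleton_iso_snd (hE.app (R.obj Q)) ?_
      haveI : Subsingleton (Abelian.Ext (R.obj Y) (E.functor.obj (R.obj Q)) j) :=
        (hEdim (R.obj Q) m).1 h (R.obj Y) j hj
      exact (eB Y (E.functor.obj (R.obj Q)) j).subsingleton
end

section
/- Let C be an abelian category with enough projectives and G a Gorenstein projective object. If there exists q>0 such that Ext^q_C(G',G)=0 for all Gorenstein projective G', then G is projective. -/
open CategoryTheory CategoryTheory.Limits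

universe w w' v v' u u'

namespace GPaux

variable {C : Type u} [Category.{v} C] [Abelian C]

open HomologicalComplex

/-- Any chain map from `P[0]` (P projective) to a complex exact in degree 0 is nullhomotopic. -/
lemma homotopy_zero_of_exactAt {P : C} (hP : Projective P) (M : CochainComplex C ℤ)
    (hM : M.ExactAt 0)
    (f : (HomologicalComplex.single C (ComplexShape.up ℤ) 0).obj P ⟶ M) :
    Nonempty (Homotopy f 0) := by
  have hS : (M.sc' (-1) 0 1).Exact := by
    rw [← M.exactAt_iff' (-1) 0 1 (by simp) (by simp)]
    exact hM
  set f₀ : P ⟶ M.X 0 := (singleObjXSelf (ComplexShape.up ℤ) 0 P).inv ≫ f.f 0 with hf₀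
  have hf₀d : f₀ ≫ M.d 0 1 = 0 := by
    rw [hf₀, Category.assoc, f.comm 0 1]
    simp [single_obj_d]
  haveI := hP
  set g : P ⟶ M.X (-1) := hS.liftFromProjective f₀ hf₀d with hg
  have hgd : g ≫ M.d (-1) 0 = f₀ := hS.liftFromProjective_comp f₀ hf₀d
  refine ⟨{
    hom := fun i j =>
      if hij : i = 0 ∧ j = -1 then
        (singleObjXIsoOfEq (ComplexShape.up ℤ) 0 P i hij.1).hom ≫ g ≫
          eqToHom (congrArg M.X hij.2.symm)
      else 0
    zero := fun i j hij => by
      rw [dif_neg]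
      rintro ⟨rfl, rfl⟩
      exact hij (by simp)
    comm := fun i => by
      by_cases hi : i = 0
      · subst hi
        rw [dNext_eq _ (show (ComplexShape.up ℤ).Rel 0 1 by simp),
          prevD_eq _ (show (ComplexShape.up ℤ).Rel (-1) 0 by simp)]
        rw [single_obj_d, zero_comp, dif_pos (⟨rfl, rfl⟩ : (0:ℤ) = 0 ∧ (-1:ℤ) = -1)]
        simp only [eqToHom_refl, Category.comp_id, Category.assoc, hgd, hf₀,
          HomologicalComplex.zero_f, add_zero, zero_add]
        simp [singleObjXSelf, singleObjXIsoOfEq]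
      · exact (isZero_single_obj_X (ComplexShape.up ℤ) 0 P i hi).eq_of_src _ _ }⟩

lemma quot_hom_ext {P : C} (hP : Projective P) (M : CochainComplex C ℤ) (hM : M.ExactAt 0)
    (φ : (HomotopyCategory.quotient C (ComplexShape.up ℤ)).obj
        ((HomologicalComplex.single C (ComplexShape.up ℤ) 0).obj P) ⟶
      (HomotopyCategory.quotient C (ComplexShape.up ℤ)).obj M) : φ = 0 := by
  obtain ⟨f, rfl⟩ := (HomotopyCategory.quotient C (ComplexShape.up ℤ)).map_surjective φ
  obtain ⟨h⟩ := homotopy_zero_of_exactAt hP M hM f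
  rw [HomotopyCategory.eq_of_homotopy _ _ h, Functor.map_zero]

lemma hom_from_single_eq_zero {P : C} (hP : Projective P)
    {Z : HomotopyCategory C (ComplexShape.up ℤ)}
    (hZ : HomotopyCategory.subcategoryAcyclic C Z)
    (φ : (HomotopyCategory.singleFunctor C 0).obj P ⟶ Z) : φ = 0 := by
  obtain ⟨M⟩ := Z
  rw [show ({ as := M } : HomotopyCategory C (ComplexShape.up ℤ)) =
    (HomotopyCategory.quotient C (ComplexShape.up ℤ)).obj M from rfl,
    HomotopyCategory.quotient_obj_mem_subcategoryAcyclic_iff_exactAt] at hZ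
  exact quot_hom_ext hP M (hZ 0) φ

open Pretriangulated in
lemma precomp_bijective {P : C} (hP : Projective P)
    {A B : HomotopyCategory C (ComplexShape.up ℤ)} (s : A ⟶ B)
    (hs : (HomotopyCategory.subcategoryAcyclic C).trW s) :
    Function.Bijective
      (fun g : (HomotopyCategory.singleFunctor C 0).obj P ⟶ A => g ≫ s) := by
  obtain ⟨Z, gz, hz, hdist, hZ⟩ := hs
  constructor
  · intro a₁ a₂ h12
    simp only at h12
    have h0 : (a₁ - a₂) ≫ s = 0 := by
      rw [Preadditive.sub_comp, h12, sub_self]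
    obtain ⟨w, hw⟩ := Triangle.coyoneda_exact₂ _
      (inv_rot_of_distTriang _ hdist) (a₁ - a₂) h0
    have hw0 : w ≫ (Triangle.mk s gz hz).invRotate.mor₁ = 0 := by rw [show w = 0 from hom_from_single_eq_zero hP
      ((HomotopyCategory.subcategoryAcyclic C).le_shift (-1) Z hZ) w, zero_comp]
    rw [← sub_eq_zero]
    exact hw.trans hw0
  · intro b
    obtain ⟨a, ha⟩ := Triangle.coyoneda_exact₂ _ hdist b
      (hom_from_single_eq_zero hP hZ _)
    exact ⟨a, ha.symm⟩

lemma qh_map_bijective [HasDerivedCategory.{w} C] {P : C} (hP : Projective P)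
    (A : HomotopyCategory C (ComplexShape.up ℤ)) :
    Function.Bijective
      (fun g : (HomotopyCategory.singleFunctor C 0).obj P ⟶ A =>
        DerivedCategory.Qh.map g) := by
  set W := (HomotopyCategory.subcategoryAcyclic C).trW
  constructor
  · intro f₁ f₂ hf
    rw [MorphismProperty.map_eq_iff_postcomp DerivedCategory.Qh W] at hf
    obtain ⟨Z, t, ht, h⟩ := hf
    exact (precomp_bijective hP t ht).injective h
  · intro φ
    obtain ⟨ψ, hψ⟩ := Localization.exists_leftFraction DerivedCategory.Qh W φ
    obtain ⟨g, hg⟩ := (precomp_bijective hP ψ.s ψ.hs).surjective ψ.f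
    refine ⟨g, ?_⟩
    have hiso : IsIso (DerivedCategory.Qh.map ψ.s) :=
      Localization.inverts DerivedCategory.Qh W ψ.s ψ.hs
    rw [hψ, ← cancel_mono (DerivedCategory.Qh.map ψ.s),
      MorphismProperty.LeftFraction.map_comp_map_s, ← Functor.map_comp]
    exact congrArg _ hg

lemma hom_from_single_eq_zero' {P : C} (hP : Projective P)
    {Z : HomotopyCategory C (ComplexShape.up ℤ)} {M : CochainComplex C ℤ}
    (hM : M.ExactAt 0)
    (e : Z ≅ (HomotopyCategory.quotient C (ComplexShape.up ℤ)).obj M)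
    (φ : (HomotopyCategory.singleFunctor C 0).obj P ⟶ Z) : φ = 0 := by
  have h : φ ≫ e.hom = 0 := quot_hom_ext hP M hM (φ ≫ e.hom)
  rw [← Category.comp_id φ, ← e.hom_inv_id, ← Category.assoc, h, zero_comp]

lemma shift_single_exactAt (Y : C) (n : ℤ) (hn : n ≠ 0) :
    ((((HomologicalComplex.single C (ComplexShape.up ℤ) 0).obj Y)⟦n⟧ :
      CochainComplex C ℤ)).ExactAt 0 := by
  rw [HomologicalComplex.exactAt_iff]
  apply ShortComplex.exact_of_isZero_X₂
  exact HomologicalComplex.isZero_single_obj_X (ComplexShape.up ℤ) 0 Y (0 + n) (by omega)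

section HasDC
variable [HasDerivedCategory.{w} C]

lemma singleD_obj_eq (X : C) :
    (DerivedCategory.singleFunctor C 0).obj X =
      DerivedCategory.Qh.obj ((HomotopyCategory.singleFunctor C 0).obj X) := rfl

lemma shiftedHom_subsingleton {P : C} (hP : Projective P) (Y : C) (n : ℤ) (hn : n ≠ 0) :
    Subsingleton ((DerivedCategory.singleFunctor C 0).obj P ⟶
      ((DerivedCategory.singleFunctor C 0).obj Y)⟦n⟧) := by
  have hz : ∀ z : ((DerivedCategory.singleFunctor C 0).obj P ⟶
      ((DerivedCategory.singleFunctor C 0).obj Y)⟦n⟧), z = 0 := by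
    intro z
    have e1 : ((DerivedCategory.singleFunctor C 0).obj Y)⟦n⟧ ≅
        DerivedCategory.Qh.obj
          ((((HomotopyCategory.singleFunctor C 0).obj Y))⟦n⟧) :=
      ((DerivedCategory.Qh.commShiftIso n).app ((HomotopyCategory.singleFunctor C 0).obj Y)).symm
    have e2 : ((((HomotopyCategory.singleFunctor C 0).obj Y))⟦n⟧ :
        HomotopyCategory C (ComplexShape.up ℤ)) ≅
        (HomotopyCategory.quotient C (ComplexShape.up ℤ)).obj
          ((((HomologicalComplex.single C (ComplexShape.up ℤ) 0).obj Y))⟦n⟧) :=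
      (((HomotopyCategory.quotient C (ComplexShape.up ℤ)).commShiftIso n).app
        ((HomologicalComplex.single C (ComplexShape.up ℤ) 0).obj Y)).symm
    obtain ⟨g, hg⟩ := (qh_map_bijective hP _).surjective (z ≫ e1.hom)
    simp only at hg
    have hg0 : g = 0 :=
      hom_from_single_eq_zero' hP (shift_single_exactAt Y n hn) e2 g
    have : z ≫ e1.hom = 0 := by rw [hg0, Functor.map_zero] at hg; exact hg.symm
    rw [← Category.comp_id z, ← e1.hom_inv_id, ← Category.assoc, this, zero_comp]
  exact ⟨fun x y => by rw [hz x, hz y]⟩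

lemma singleK_map_bijective (P Y : C) :
    Function.Bijective (fun f : P ⟶ Y => (HomotopyCategory.singleFunctor C 0).map f) := by
  constructor
  · intro f₁ f₂ h
    have hcomm := (HomotopyCategory.homotopyOfEq _ _ h).comm 0
    simp only [dNext, prevD, CochainComplex.singleFunctors, AddMonoidHom.mk'_apply,
      HomologicalComplex.single_obj_d, zero_comp, comp_zero,
      AddMonoidHom.coe_mk, ZeroHom.coe_mk, zero_add, add_zero] at hcomm
    rw [HomologicalComplex.single_map_f_self, HomologicalComplex.single_map_f_self] at hcomm
    rw [← cancel_epi (HomologicalComplex.singleObjXSelf (ComplexShape.up ℤ) 0 P).hom,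
      ← cancel_mono (HomologicalComplex.singleObjXSelf (ComplexShape.up ℤ) 0 Y).inv]
    simpa using hcomm.trans (show _ = 0 + 0 + _ from rfl)
  · intro φ
    obtain ⟨u, hu⟩ := (HomotopyCategory.quotient C (ComplexShape.up ℤ)).map_surjective φ
    obtain ⟨f, hf⟩ := (HomologicalComplex.single C (ComplexShape.up ℤ) 0).map_surjective u
    exact ⟨f, by rw [← hu, ← hf]; rfl⟩

lemma singleD_map_bijective {P : C} (hP : Projective P) (Y : C) :
    Function.Bijective (fun f : P ⟶ Y => (DerivedCategory.singleFunctor C 0).map f) :=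
  (qh_map_bijective hP ((HomotopyCategory.singleFunctor C 0).obj Y)).comp
    (singleK_map_bijective P Y)

end HasDC
section ExtLemmas
variable [HasExt.{w} C]
open Abelian

lemma ext_subsingleton_of_projective {P : C} (hP : Projective P) (Y : C) {n : ℕ}
    (hn : 0 < n) : Subsingleton (Ext P Y n) := by
  letI := HasDerivedCategory.standard C
  have hs := shiftedHom_subsingleton (C := C) hP Y (n : ℤ)
    (by exact_mod_cast hn.ne')
  exact ⟨fun a b => Ext.homAddEquiv.injective (@Subsingleton.elim _ hs _ _)⟩

lemma mk₀_bijective_of_projective {P : C} (hP : Projective P) (Y : C) :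
    Function.Bijective (fun f : P ⟶ Y => Ext.mk₀ (C := C) f) := by
  letI := HasDerivedCategory.standard C
  have hbij : Function.Bijective
      (fun g : ((DerivedCategory.singleFunctor C 0).obj P ⟶
          (DerivedCategory.singleFunctor C 0).obj Y) =>
        ShiftedHom.mk₀ (((0 : ℕ) : ℤ)) (by simp)  g) := by
    constructor
    · intro a b hab
      simp only [ShiftedHom.mk₀] at hab
      exact (cancel_mono _).1 hab
    · intro t
      refine ⟨t ≫ (shiftFunctorZero' (DerivedCategory C) ((0 : ℕ) : ℤ)
        (by simp)).hom.app _, ?_⟩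
      simp [ShiftedHom.mk₀]
  have hcomp := hbij.comp (singleD_map_bijective hP Y)
  have heq : (fun f : P ⟶ Y => Ext.homAddEquiv (Ext.mk₀ (C := C) f)) =
      (fun g : ((DerivedCategory.singleFunctor C 0).obj P ⟶
          (DerivedCategory.singleFunctor C 0).obj Y) =>
        ShiftedHom.mk₀ (((0 : ℕ) : ℤ)) (by simp) g) ∘
      (fun f : P ⟶ Y => (DerivedCategory.singleFunctor C 0).map f) := by
    funext f
    rw [Ext.homAddEquiv_apply, Ext.mk₀_hom]
    rfl
  have h2 : Function.Bijective (fun f : P ⟶ Y => Ext.homAddEquiv (Ext.mk₀ (C := C) f)) := by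
    rw [heq]; exact hcomp
  constructor
  · intro a b hab
    exact h2.injective (by simp [hab])
  · intro x
    obtain ⟨f, hf⟩ := h2.surjective (Ext.homAddEquiv x)
    exact ⟨f, Ext.homAddEquiv.injective hf⟩

lemma mk₀_injective [EnoughProjectives C] (X Y : C) :
    Function.Injective (fun f : X ⟶ Y => Ext.mk₀ (C := C) f) := by
  intro f₁ f₂ h
  have h' : Ext.mk₀ (Projective.π X ≫ f₁) = Ext.mk₀ (Projective.π X ≫ f₂) := by
    rw [← Ext.mk₀_comp_mk₀, ← Ext.mk₀_comp_mk₀]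
    simp only at h
    rw [h]
  have := (mk₀_bijective_of_projective
    (inferInstance : Projective (Projective.over X)) Y).injective h'
  exact (cancel_epi (Projective.π X)).1 this

end ExtLemmas
section Defs2

/-- The shift of a `ℤ`-indexed chain complex. -/
@[simps]
def shiftChain (P : ChainComplex C ℤ) (k : ℤ) : ChainComplex C ℤ where
  X i := P.X (i + k)
  d i j := P.d (i + k) (j + k)
  shape i j hij := P.shape _ _ (by
    simp only [ComplexShape.down_Rel] at hij ⊢
    omega)
  d_comp_d' i j l _ _ := P.d_comp_d _ _ _

lemma isTotallyAcyclic_shiftChain {P : ChainComplex C ℤ} (hP : IsTotallyAcyclic P) (k : ℤ) :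
    IsTotallyAcyclic (shiftChain P k) where
  projective i := hP.projective _
  acyclic i := by
    have h := hP.acyclic (i + k)
    rw [P.exactAt_iff' (i + 1 + k) (i + k) (i - 1 + k)
      ((ComplexShape.down ℤ).prev_eq' (by simp only [ComplexShape.down_Rel]; try omega))
      ((ComplexShape.down ℤ).next_eq' (by simp only [ComplexShape.down_Rel]; try omega))] at h
    rw [(shiftChain P k).exactAt_iff' (i + 1) i (i - 1)
      ((ComplexShape.down ℤ).prev_eq' (by simp only [ComplexShape.down_Rel]; try omega))
      ((ComplexShape.down ℤ).next_eq' (by simp only [ComplexShape.down_Rel]; try omega))]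
    exact h
  homExact Q hQ i f hf := by
    have hf' : P.d ((i + k) + 1) (i + k) ≫ f = 0 := by
      rw [show (i + k) + 1 = (i + 1) + k by omega]
      exact hf
    obtain ⟨g, hg⟩ := hP.homExact Q hQ (i + k) f hf'
    refine ⟨eqToHom (congrArg P.X (by omega : i - 1 + k = i + k - 1)) ≫ g, ?_⟩
    have key : ∀ {a b : ℤ} (e : a = b),
        P.d (i + k) a ≫ eqToHom (congrArg P.X e) = P.d (i + k) b := by
      rintro a b rfl; simp
    rw [shiftChain_d]
    exact (Category.assoc _ _ _).symm.trans ((congrArg (· ≫ g) (key (by omega : i - 1 + k = i + k - 1))).trans hg)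

lemma isGP_syzygy {P : ChainComplex C ℤ} (hP : IsTotallyAcyclic P) (j : ℤ) :
    IsGorensteinProjective (cokernel (P.d (j + 1) j)) := by
  refine ⟨shiftChain P j, isTotallyAcyclic_shiftChain hP j, ?_⟩
  show Nonempty (cokernel (P.d (j + 1) j) ≅ cokernel (P.d (1 + j) (0 + j)))
  rw [show (1 : ℤ) + j = j + 1 by omega, show (0 : ℤ) + j = j by omega]
  exact ⟨Iso.refl _⟩

/-- The short exact sequence `0 ⟶ Z_j ⟶ P_{j-1} ⟶ Z_{j-1} ⟶ 0` of syzygies. -/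
lemma syzygy_shortExact {P : ChainComplex C ℤ} (hP : IsTotallyAcyclic P) (j : ℤ) :
    (ShortComplex.mk
      (cokernel.desc (P.d (j + 1) j) (P.d j (j - 1)) (P.d_comp_d _ _ _))
      (cokernel.π (P.d j (j - 1)))
      (by
        rw [← cancel_epi (cokernel.π (P.d (j + 1) j))]
        simp [cokernel.condition])).ShortExact := by
  set u := cokernel.desc (P.d (j + 1) j) (P.d j (j - 1)) (P.d_comp_d _ _ _) with hu
  have hmono : Mono u := by
    have hS : (P.sc' (j + 1) j (j - 1)).Exact := by
      rw [← P.exactAt_iff' (j + 1) j (j - 1)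
        ((ComplexShape.down ℤ).prev_eq' (by simp only [ComplexShape.down_Rel]; try omega))
        ((ComplexShape.down ℤ).next_eq' (by simp only [ComplexShape.down_Rel]; try omega))]
      exact hP.acyclic j
    have hmono' : Mono (P.sc' (j + 1) j (j - 1)).fromOpcycles :=
      (P.sc' (j + 1) j (j - 1)).exact_iff_mono_fromOpcycles.1 hS
    have he : u = (P.sc' (j + 1) j (j - 1)).opcyclesIsoCokernel.inv ≫
        (P.sc' (j + 1) j (j - 1)).fromOpcycles := by
      refine (cancel_epi (cokernel.π (P.d (j + 1) j))).1 ?_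
      simp [hu, ShortComplex.opcyclesIsoCokernel, ShortComplex.p_fromOpcycles]
      exact (ShortComplex.p_fromOpcycles (P.sc' (j + 1) j (j - 1))).symm.trans (cokernel.π_desc_assoc _ _ _ _).symm
    rw [he]
    exact @mono_comp _ _ _ _ _ _ ⟨fun g h w => (Iso.cancel_iso_inv_right _ _ _).1 w⟩ _ hmono'
  refine { exact := ?_, mono_f := hmono, epi_g := inferInstance }
  apply ShortComplex.exact_of_g_is_cokernel
  refine CokernelCofork.IsColimit.ofπ _ _
    (fun t ht => cokernel.desc (P.d j (j - 1)) t (by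
      rw [← cokernel.π_desc (P.d (j + 1) j) (P.d j (j - 1)) (P.d_comp_d _ _ _),
        Category.assoc, ht, comp_zero]))
    (fun t ht => by simp)
    (fun t ht m hm => by
      rw [← cancel_epi (cokernel.π (P.d j (j - 1))), hm]
      simp)

end Defs2

section Main
variable [HasExt.{w} C]
open Abelian

lemma projective_of_retract {X Pj : C} (hp : Projective Pj) (i : X ⟶ Pj) (r : Pj ⟶ X)
    (hir : i ≫ r = 𝟙 X) : Projective X where
  factors {E X'} f e he := by
    obtain ⟨g, hg⟩ := hp.factors (r ≫ f) e
    exact ⟨i ≫ g, by rw [Category.assoc, hg, ← Category.assoc, hir, Category.id_comp]⟩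

lemma ext_subsingleton_of_iso_snd {X Y Y' : C} (e : Y ≅ Y') (n : ℕ)
    (h : Subsingleton (Ext X Y' n)) : Subsingleton (Ext X Y n) := by
  refine ⟨fun a b => ?_⟩
  have h1 : a.comp (Ext.mk₀ e.hom) (add_zero n) = b.comp (Ext.mk₀ e.hom) (add_zero n) :=
    @Subsingleton.elim _ h _ _
  have h2 := congrArg (fun z : Ext X Y' n => z.comp (Ext.mk₀ e.inv) (add_zero n)) h1
  simpa only [Ext.comp_assoc_of_third_deg_zero, Ext.mk₀_comp_mk₀, Iso.hom_inv_id,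
    Ext.comp_mk₀_id] using h2

/-- The dimension-shifting step. -/
lemma descent_step [EnoughProjectives C] {P : ChainComplex C ℤ} (hP : IsTotallyAcyclic P)
    (Y : C) (j : ℤ) (n : ℕ) (hn : 0 < n)
    (hsub : Subsingleton (Ext (cokernel (P.d j (j - 1))) Y (n + 1))) :
    Subsingleton (Ext (cokernel (P.d (j + 1) j)) Y n) := by
  have hS := syzygy_shortExact hP j
  refine ⟨fun a b => ?_⟩
  suffices hz : ∀ x : Ext (cokernel (P.d (j + 1) j)) Y n, x = 0 by rw [hz a, hz b]
  intro x
  have hδ : hS.extClass.comp x (show 1 + n = n + 1 by omega) = 0 := @Subsingleton.elim _ hsub _ _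
  obtain ⟨x₂, hx₂⟩ := Ext.contravariant_sequence_exact₁ hS Y x (show 1 + n = n + 1 by omega) hδ
  have hproj : Projective (P.X (j - 1)) := hP.projective _
  have : x₂ = 0 := @Subsingleton.elim _ (ext_subsingleton_of_projective hproj Y hn) _ _
  rw [← hx₂, this, Ext.comp_zero]

theorem main [EnoughProjectives C] (G : C) (hG : IsGorensteinProjective G) (q : ℕ)
    (hq : 0 < q) (h : ∀ G' : C, IsGorensteinProjective G' → Subsingleton (Ext G' G q)) :
    Projective G := by
  obtain ⟨P, hP, ⟨e⟩⟩ := hG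
  -- descent: Subsingleton (Ext (Z (-m)) G m) for 1 ≤ m ≤ q, downward from q
  have descent : ∀ (i m : ℕ), m + i = q → 0 < m →
      Subsingleton (Ext (cokernel (P.d (1 - (m : ℤ)) (-(m : ℤ)))) G m) := by
    intro i
    induction i with
    | zero =>
      intro m hm _
      obtain rfl : m = q := by omega
      have hgp := isGP_syzygy hP (-(m : ℤ))
      rw [show -(m : ℤ) + 1 = 1 - (m : ℤ) by omega] at hgp
      exact h _ hgp
    | succ i ih =>
      intro m hm hm0
      have hnext := ih (m + 1) (by omega) (by omega)
      rw [show (1 : ℤ) - (((m + 1) : ℕ) : ℤ) = -(m : ℤ) by push_cast; try omega,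
        show (-(((m + 1) : ℕ) : ℤ)) = -(m : ℤ) - 1 by push_cast; try omega] at hnext
      have := descent_step hP G (-(m : ℤ)) m hm0 hnext
      rw [show -(m : ℤ) + 1 = 1 - (m : ℤ) by omega] at this
      exact this
  have hA1 : Subsingleton (Ext (cokernel (P.d 0 (-1 : ℤ))) G 1) := by
    have := descent (q - 1) 1 (by omega) (by omega)
    rw [show (1 : ℤ) - ((1 : ℕ) : ℤ) = 0 by push_cast; try omega,
      show -((1 : ℕ) : ℤ) = -1 by push_cast; try omega] at this
    exact this
  -- the short exact sequence 0 → Z₀ → P₋₁ → Z₋₁ → 0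
  have hS := syzygy_shortExact hP 0
  set S := ShortComplex.mk
      (cokernel.desc (P.d (0 + 1) 0) (P.d 0 (0 - 1)) (P.d_comp_d _ _ _))
      (cokernel.π (P.d 0 (0 - 1)))
      (by rw [← cancel_epi (cokernel.π (P.d (0 + 1) 0))]; simp [cokernel.condition])
    with hSdef
  -- identify G with S.X₁
  have e' : G ≅ cokernel (P.d (0 + 1) 0) := by
    rw [show (0 : ℤ) + 1 = 1 by omega]
    exact e
  -- Subsingleton (Ext S.X₃ S.X₁ 1)
  have hsub : Subsingleton (Ext (cokernel (P.d 0 ((0 : ℤ) - 1))) (cokernel (P.d ((0 : ℤ) + 1) 0)) 1) := by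
    apply ext_subsingleton_of_iso_snd e'.symm
    rw [show (0 : ℤ) - 1 = -1 by omega]
    exact hA1
  have hδ : hS.extClass.comp (Ext.mk₀ (𝟙 (cokernel (P.d ((0 : ℤ) + 1) 0)))) (show 1 + 0 = 1 by omega) = 0 :=
    @Subsingleton.elim _ hsub _ _
  obtain ⟨x₂, hx₂⟩ := Ext.contravariant_sequence_exact₁ hS _ (Ext.mk₀ (𝟙 _)) (show 1 + 0 = 1 by omega) hδ
  have hproj : Projective (P.X ((0 : ℤ) - 1)) := hP.projective _
  obtain ⟨r, hr⟩ := (mk₀_bijective_of_projective hproj _).surjective x₂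
  have hfr : (cokernel.desc (P.d ((0:ℤ) + 1) 0) (P.d 0 ((0:ℤ) - 1)) (P.d_comp_d _ _ _)) ≫ r =
      𝟙 (cokernel (P.d ((0 : ℤ) + 1) 0)) := by
    apply mk₀_injective
    simp only
    rw [← Ext.mk₀_comp_mk₀]
    rw [← hr] at hx₂
    exact hx₂
  exact projective_of_retract hproj (e'.hom ≫ _) (r ≫ e'.inv)
    (by rw [Category.assoc, ← Category.assoc _ r, hfr, Category.id_comp, Iso.hom_inv_id])

end Main


end GPaux

/-- A Gorenstein projective object all of whose `q`-th extensions from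
Gorenstein projectives vanish is projective. -/
theorem gp_projective_of_ext_vanish {C : Type u} [Category.{v} C] [Abelian C]
    [EnoughProjectives C] [HasExt.{w} C]
    (G : C) (hG : IsGorensteinProjective G) (q : ℕ) (hq : 0 < q)
    (h : ∀ G' : C, IsGorensteinProjective G' → Subsingleton (Abelian.Ext G' G q)) :
    Projective G :=
  GPaux.main G hG q hq h
end
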